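/- Let F be a hereditary and spreading family on ℕ, let n ∈ ℕ, let s ∈ F with |s| = n, and let t be a spread of s (so that t ∈ F and |t| = n). For a set u ∈ F put I_u = { i ∈ ℕ : {i} ∪ u ∉ F }. Then the cardinality of I_t is at most the cardinality of I_s. -/

import Mathlib

open scoped Classical

noncomputable section

/-- Characteristic function of a finite set, as an element of the Cantor cube `2^ι`. -/
def chi {ι : Type*} (s : Finset ι) : ι → Bool := fun a => decide (a ∈ s)

/-- The copy of a collection of finite sets inside the Cantor cube `2^ι`. -/
def chiImg {ι : Type*} (F : Set (Finset ι)) : Set (ι → Bool) := chi '' F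

/-- `F` is a family: it contains the empty set and all singletons. -/
def IsFam {ι : Type*} (F : Set (Finset ι)) : Prop := ∅ ∈ F ∧ ∀ a : ι, {a} ∈ F

/-- `F` is hereditary: it is closed under subsets. -/
def IsHereditary {ι : Type*} (F : Set (Finset ι)) : Prop :=
  ∀ ⦃s t : Finset ι⦄, s ⊆ t → t ∈ F → s ∈ F

/-- `F` is compact: its copy in the Cantor cube `2^ι` is closed
(equivalently, compact). -/
def IsCompactFam {ι : Type*} (F : Set (Finset ι)) : Prop := IsClosed (chiImg F)

/-- The set of maximal elements of `F` with respect to inclusion. -/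
def famMAX {ι : Type*} (F : Set (Finset ι)) : Set (Finset ι) :=
  {s ∈ F | ∀ t ∈ F, s ⊆ t → s = t}

/-- The image `{π[s] : s ∈ F}` of a collection of finite sets under a permutation of the
index set. -/
def permImg {ι : Type*} (π : Equiv.Perm ι) (F : Set (Finset ι)) : Set (Finset ι) :=
  (fun s => Finset.image π s) '' F

/-- `t` is a spread of `s`: there is an injection `σ` of `s` into the index set with
`σ i ≥ i` for every `i ∈ s`, whose image is `t`. -/
def IsSpread {ι : Type*} [LinearOrder ι] (s t : Finset ι) : Prop :=
  ∃ σ : ι → ι, Set.InjOn σ ↑s ∧ (∀ i ∈ s, i ≤ σ i) ∧ t = Finset.image σ s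

/-- `F` is spreading: it contains every spread of each of its members. -/
def IsSpreading {ι : Type*} [LinearOrder ι] (F : Set (Finset ι)) : Prop :=
  ∀ s ∈ F, ∀ t, IsSpread s t → t ∈ F

namespace Statement10Aux

/-- number of elements of `u` below `m` -/
def cnt (u : Finset ℕ) (m : ℕ) : ℕ := (u.filter (· < m)).card

lemma orderEmbOfFin_lt_iff {u : Finset ℕ} {n : ℕ} (hn : u.card = n) (k : Fin n) (m : ℕ) :
    u.orderEmbOfFin hn k < m ↔ (k : ℕ) < cnt u m := by
  constructor
  · intro h
    have hsub : ∀ r ∈ Finset.range ((k : ℕ) + 1),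
        (if hr : r < n then u.orderEmbOfFin hn ⟨r, hr⟩ else 0) ∈ u.filter (· < m) := by
      intro r hr
      rw [Finset.mem_range] at hr
      have hrn : r < n := lt_of_lt_of_le hr k.isLt
      rw [dif_pos hrn]
      refine Finset.mem_filter.mpr ⟨Finset.orderEmbOfFin_mem u hn _, ?_⟩
      exact lt_of_le_of_lt ((u.orderEmbOfFin hn).monotone (by rw [Fin.le_def]; exact Nat.lt_succ_iff.mp hr)) h
    have hinj : Set.InjOn (fun r => if hr : r < n then u.orderEmbOfFin hn ⟨r, hr⟩ else 0)
        ↑(Finset.range ((k : ℕ) + 1)) := by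
      intro a ha b hb hab
      simp only [Finset.coe_range, Set.mem_Iio] at ha hb
      have han : a < n := lt_of_lt_of_le ha k.isLt
      have hbn : b < n := lt_of_lt_of_le hb k.isLt
      simp only at hab
      rw [dif_pos han, dif_pos hbn] at hab
      have := (u.orderEmbOfFin hn).injective hab
      exact Fin.mk.inj_iff.mp this
    have := Finset.card_le_card_of_injOn _ hsub hinj
    simpa [cnt] using this
  · intro h
    by_contra hm
    push_neg at hm
    have hsub : u.filter (· < m) ⊆ (Finset.range (k : ℕ)).image
        (fun r => if hr : r < n then u.orderEmbOfFin hn ⟨r, hr⟩ else 0) := by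
      intro x hx
      obtain ⟨hxu, hxm⟩ := Finset.mem_filter.mp hx
      obtain ⟨r, hr⟩ : ∃ r : Fin n, u.orderEmbOfFin hn r = x := by
        have : x ∈ Set.range (u.orderEmbOfFin hn) := by
          rw [Finset.range_orderEmbOfFin u hn]; exact_mod_cast hxu
        exact this
      have hrk : (r : ℕ) < (k : ℕ) := by
        by_contra hge
        push_neg at hge
        have : u.orderEmbOfFin hn k ≤ u.orderEmbOfFin hn r :=
          (u.orderEmbOfFin hn).monotone (by rw [Fin.le_def]; exact hge)
        omega
      refine Finset.mem_image.mpr ⟨(r : ℕ), Finset.mem_range.mpr hrk, ?_⟩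
      rw [dif_pos r.isLt]
      exact hr
    have h1 := (Finset.card_le_card hsub).trans Finset.card_image_le
    simp only [Finset.card_range] at h1
    have h2 : cnt u m ≤ (k : ℕ) := by simpa [cnt] using h1
    omega
  
lemma orderEmbOfFin_le {A B : Finset ℕ} {n : ℕ} (hA : A.card = n) (hB : B.card = n)
    (h : ∀ m, cnt B m ≤ cnt A m) (k : Fin n) :
    A.orderEmbOfFin hA k ≤ B.orderEmbOfFin hB k := by
  have h1 : (k : ℕ) < cnt B (B.orderEmbOfFin hB k + 1) :=
    (orderEmbOfFin_lt_iff hB k _).mp (Nat.lt_succ_self _)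
  have h2 : A.orderEmbOfFin hA k < B.orderEmbOfFin hB k + 1 :=
    (orderEmbOfFin_lt_iff hA k _).mpr (lt_of_lt_of_le h1 (h _))
  omega


lemma spread_of_cnt {A B : Finset ℕ} (hc : B.card = A.card) (h : ∀ m, cnt B m ≤ cnt A m) :
    IsSpread A B := by
  refine ⟨fun a => if ha : a ∈ A then B.orderEmbOfFin hc ((A.orderIsoOfFin rfl).symm ⟨a, ha⟩)
    else a, ?_, ?_, ?_⟩
  · intro a ha b hb hab
    dsimp only at hab
    rw [dif_pos (Finset.mem_coe.mp ha), dif_pos (Finset.mem_coe.mp hb)] at hab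
    have h1 := (B.orderEmbOfFin hc).injective hab
    have h2 := (A.orderIsoOfFin rfl).symm.injective h1
    exact congrArg Subtype.val h2
  · intro a ha
    dsimp only
    rw [dif_pos ha]
    have h1 : A.orderEmbOfFin rfl ((A.orderIsoOfFin rfl).symm ⟨a, ha⟩) = a := by
      have := (A.orderIsoOfFin rfl).apply_symm_apply ⟨a, ha⟩
      calc A.orderEmbOfFin rfl ((A.orderIsoOfFin rfl).symm ⟨a, ha⟩)
          = ((A.orderIsoOfFin rfl) ((A.orderIsoOfFin rfl).symm ⟨a, ha⟩) : ℕ) := rfl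
        _ = a := by rw [this]
    calc a = A.orderEmbOfFin rfl ((A.orderIsoOfFin rfl).symm ⟨a, ha⟩) := h1.symm
      _ ≤ B.orderEmbOfFin hc ((A.orderIsoOfFin rfl).symm ⟨a, ha⟩) :=
        orderEmbOfFin_le rfl hc h _
  · have hsub : A.image (fun a => if ha : a ∈ A then
        B.orderEmbOfFin hc ((A.orderIsoOfFin rfl).symm ⟨a, ha⟩) else a) ⊆ B := by
      intro x hx
      obtain ⟨a, ha, rfl⟩ := Finset.mem_image.mp hx
      rw [dif_pos ha]
      exact Finset.orderEmbOfFin_mem B hc _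
    have hinj2 : Set.InjOn (fun a => if ha : a ∈ A then
        B.orderEmbOfFin hc ((A.orderIsoOfFin rfl).symm ⟨a, ha⟩) else a) ↑A := by
      intro a ha b hb hab
      dsimp only at hab
      rw [dif_pos (Finset.mem_coe.mp ha), dif_pos (Finset.mem_coe.mp hb)] at hab
      have h1 := (B.orderEmbOfFin hc).injective hab
      have h2 := (A.orderIsoOfFin rfl).symm.injective h1
      exact congrArg Subtype.val h2
    have hcard2 := Finset.card_image_of_injOn hinj2
    exact (Finset.eq_of_subset_of_card_le hsub (by rw [hcard2, hc])).symm

lemma cnt_le_of_spread {s t : Finset ℕ} (h : IsSpread s t) (m : ℕ) : cnt t m ≤ cnt s m := by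
  obtain ⟨σ, hinj, hle, rfl⟩ := h
  unfold cnt
  rw [Finset.filter_image, Finset.card_image_of_injOn
    (hinj.mono (Finset.coe_subset.mpr (Finset.filter_subset _ s)))]
  apply Finset.card_le_card
  intro x hx
  obtain ⟨hxs, hxm⟩ := Finset.mem_filter.mp hx
  exact Finset.mem_filter.mpr ⟨hxs, lt_of_le_of_lt (hle x hxs) hxm⟩

lemma cnt_add_count (u : Finset ℕ) (m : ℕ) :
    cnt u m + Nat.count (fun x => x ∉ u) m = m := by
  rw [Nat.count_eq_card_filter_range]
  have h2 : cnt u m = ((Finset.range m).filter (fun x => x ∈ u)).card := by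
    unfold cnt
    congr 1
    ext x
    simp only [Finset.mem_filter, Finset.mem_range]
    tauto
  rw [h2]
  simpa using Finset.card_filter_add_card_filter_not
    (s := Finset.range m) (p := fun x => x ∈ u)

end Statement10Aux

/-- Let `F` be a hereditary spreading family on `ℕ`, let `s ∈ F` with
`|s| = n` and let `t` be a spread of `s`. With `I_u = {i : {i} ∪ u ∉ F}`, we have
`|I_t| ≤ |I_s|`. -/

theorem statement10 (F : Set (Finset ℕ))
    (hfam : IsFam F) (hh : IsHereditary F) (hs : IsSpreading F)
    (n : ℕ) (s : Finset ℕ) (hsF : s ∈ F) (hcard : s.card = n)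
    (t : Finset ℕ) (ht : IsSpread s t) :
    {i : ℕ | insert i t ∉ F}.encard ≤ {i : ℕ | insert i s ∉ F}.encard := by
  classical
  open Statement10Aux in
  have htF : t ∈ F := hs s hsF t ht
  set P : ℕ → Prop := fun i => insert i t ∉ F with hP
  set Q : ℕ → Prop := fun j => j ∉ s with hQ
  have hQinf : (setOf Q).Infinite := by
    have he : setOf Q = (↑s : Set ℕ)ᶜ := rfl
    rw [he]
    exact s.finite_toSet.infinite_compl
  have hPt : ∀ i, P i → i ∉ t := fun i hi hit => hi (by rwa [Finset.insert_eq_self.mpr hit])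
  have hcnt : ∀ m, cnt t m ≤ cnt s m := cnt_le_of_spread ht
  have hcards : t.card = s.card := by
    obtain ⟨σ, hinj, hle, rfl⟩ := ht
    exact Finset.card_image_of_injOn hinj
  set φ : ℕ → ℕ := fun i => Nat.nth Q (Nat.count P i) with hφ
  have key : ∀ i, P i → insert (φ i) s ∉ F := by
    intro i hi hins
    apply hi
    set k := Nat.count P i with hk
    set j := Nat.nth Q k with hj
    have hjQ : Q j := Nat.nth_mem_of_infinite hQinf k
    have hit : i ∉ t := hPt i hi
    have hsp : IsSpread (insert j s) (insert i t) := by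
      apply spread_of_cnt
      · rw [Finset.card_insert_of_notMem hit, Finset.card_insert_of_notMem hjQ, hcards]
      · intro m
        by_cases him : i < m
        · have hins_t : cnt (insert i t) m = cnt t m + 1 := by
            unfold cnt
            rw [Finset.filter_insert, if_pos him,
              Finset.card_insert_of_notMem (fun hx => hit (Finset.mem_of_mem_filter _ hx))]
          by_cases hjm : j < m
          · have hins_s : cnt (insert j s) m = cnt s m + 1 := by
              unfold cnt
              rw [Finset.filter_insert, if_pos hjm,
                Finset.card_insert_of_notMem (fun hx => hjQ (Finset.mem_of_mem_filter _ hx))]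
            rw [hins_t, hins_s]
            exact Nat.add_le_add_right (hcnt m) 1
          · have h1 : Nat.count Q m ≤ k := by
              by_contra hc
              push_neg at hc
              exact hjm (Nat.nth_lt_of_lt_count hc)
            have h2 : k + 1 ≤ Nat.count (fun x => x ∉ t) m := by
              have e1 : Nat.count P (i + 1) = k + 1 := by
                rw [hk]
                exact Nat.count_succ_eq_succ_count_iff.mpr hi
              have e2 : Nat.count P (i + 1) ≤ Nat.count (fun x => x ∉ t) (i + 1) := by
                rw [Nat.count_eq_card_filter_range, Nat.count_eq_card_filter_range]
                exact Finset.card_le_card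
                  (Finset.monotone_filter_right _ (fun x _ hx => hPt x hx))
              have e3 : Nat.count (fun x => x ∉ t) (i + 1) ≤ Nat.count (fun x => x ∉ t) m :=
                Nat.count_monotone _ him
              omega
            have h3 := cnt_add_count s m
            have h4 := cnt_add_count t m
            have h5 : Nat.count Q m = Nat.count (fun x => x ∉ s) m := rfl
            have hins_s : cnt (insert j s) m = cnt s m := by
              unfold cnt
              rw [Finset.filter_insert, if_neg hjm]
            rw [hins_t, hins_s]
            omega
        · have hins_t : cnt (insert i t) m = cnt t m := by
            unfold cnt
            rw [Finset.filter_insert, if_neg him]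
          rw [hins_t]
          refine (hcnt m).trans (Finset.card_le_card ?_)
          exact Finset.filter_subset_filter _ (Finset.subset_insert _ _)
    exact hs _ hins _ hsp
  have hinj : Set.InjOn φ {i | P i} := by
    have hmono : ∀ ⦃a b : ℕ⦄, a ∈ {i | P i} → b ∈ {i | P i} → a < b → φ a < φ b := by
      intro a b ha hb hab
      apply Nat.nth_strictMono hQinf
      have e1 : Nat.count P (a + 1) = Nat.count P a + 1 :=
        Nat.count_succ_eq_succ_count_iff.mpr ha
      have e2 : Nat.count P (a + 1) ≤ Nat.count P b := Nat.count_monotone _ hab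
      omega
    intro a ha b hb hab
    rcases lt_trichotomy a b with h | h | h
    · exact absurd hab (hmono ha hb h).ne
    · exact h
    · exact absurd hab.symm (hmono hb ha h).ne
  exact Set.encard_le_encard_of_injOn (fun i hi => key i hi) hinj
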